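/- Let (X,d) be a compact metric space and f : X → X a continuous, open, distance-expanding and topologically exact map, and let φ : X → ℝ be continuous. Then for every z ∈ X the tree pressure P_tree(f,φ,z) = limsup_{n→∞} (1/n)·log Σ_{y ∈ (f^[n])⁻¹{z}} exp(S_nφ(y)) equals the topological pressure via separated sets P_sep(f,φ); in particular P_tree(f,φ,z) does not depend on z. -/

import Mathlib

open Filter Metric Set Topology

noncomputable section

/-- `Y` is an `(n,ε)`-separated set for `f`. -/
def IsSepSet {X : Type*} [MetricSpace X] (f : X → X) (n : ℕ) (ε : ℝ) (Y : Finset X) : Prop :=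
  ∀ y₁ ∈ Y, ∀ y₂ ∈ Y, y₁ ≠ y₂ → ∃ j ≤ n, ε ≤ dist (f^[j] y₁) (f^[j] y₂)

/-- The Birkhoff sum `S_n φ`. -/
def birkhoff {X : Type*} (f : X → X) (φ : X → ℝ) (n : ℕ) (y : X) : ℝ :=
  ∑ j ∈ Finset.range n, φ (f^[j] y)

/-- The topological pressure via separated sets (the limit as `ε → 0⁺` exists by
monotonicity, so it is computed here as a `limsup` along `𝓝[>] 0`). -/
def sepPressure {X : Type*} [MetricSpace X] (f : X → X) (φ : X → ℝ) : ℝ :=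
  Filter.limsup (fun ε : ℝ =>
    Filter.limsup (fun n : ℕ => (1 / (n : ℝ)) * Real.log
      (sSup {s : ℝ | ∃ Y : Finset X, IsSepSet f n ε Y ∧
        s = ∑ y ∈ Y, Real.exp (birkhoff f φ n y)})) Filter.atTop)
    (𝓝[>] (0 : ℝ))

/-- The tree pressure `P_tree(f,φ,z)`. -/
def treePressure {X : Type*} [MetricSpace X] (f : X → X) (φ : X → ℝ) (z : X) : ℝ :=
  Filter.limsup (fun n : ℕ =>
    (1 / (n : ℝ)) * Real.log (∑' y : ((f^[n]) ⁻¹' {z} : Set X),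
      Real.exp (birkhoff f φ n y))) Filter.atTop

/-- `f` is distance expanding. -/
def DistExpanding {X : Type*} [MetricSpace X] (f : X → X) : Prop :=
  ∃ lam > 1, ∃ η > 0, ∀ x y : X, dist x y ≤ 2 * η → lam * dist x y ≤ dist (f x) (f y)

/-- `f` is topologically exact. -/
def TopExact {X : Type*} [TopologicalSpace X] (f : X → X) : Prop :=
  ∀ U : Set X, IsOpen U → U.Nonempty → ∃ n : ℕ, f^[n] '' U = Set.univ

/-- Cardinality bound for `(n,ε)`-separated sets. -/
lemma sep_card_bound {X : Type*} [MetricSpace X] [CompactSpace X] (f : X → X) {ε : ℝ}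
    (hε : 0 < ε) : ∃ K : ℕ, 0 < K ∧ ∀ n (Y : Finset X), IsSepSet f n ε Y →
      Y.card ≤ K ^ (n + 1) := by
  rcases isEmpty_or_nonempty X with hX | hX
  · exact ⟨1, one_pos, fun n Y _ => by simp [Finset.eq_empty_of_isEmpty Y]⟩
  obtain ⟨t, -, htf, htc⟩ := finite_cover_balls_of_compact (isCompact_univ (X := X))
    (half_pos hε)
  haveI := htf.fintype
  set F : Finset X := htf.toFinset with hF
  have hFne : F.Nonempty := by
    rcases hX with ⟨x⟩
    have := htc (mem_univ x)
    simp only [mem_iUnion] at this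
    obtain ⟨c, hc, -⟩ := this
    exact ⟨c, htf.mem_toFinset.2 hc⟩
  refine ⟨F.card, Finset.card_pos.2 hFne, fun n Y hY => ?_⟩
  -- coding map
  have hcode : ∀ x : X, ∃ c : X, c ∈ F ∧ dist x c < ε / 2 := by
    intro x
    have := htc (mem_univ x)
    simp only [mem_iUnion] at this
    obtain ⟨c, hc, hxc⟩ := this
    exact ⟨c, htf.mem_toFinset.2 hc, by simpa [dist_comm] using hxc⟩
  choose c hcF hcd using hcode
  have hinj : Function.Injective
      (fun y : ↥Y => (fun j : Fin (n + 1) => (⟨c (f^[(j : ℕ)] y), hcF _⟩ : ↥F))) := by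
    rintro ⟨y₁, hy₁⟩ ⟨y₂, hy₂⟩ h
    ext
    by_contra hne
    obtain ⟨j, hjn, hjd⟩ := hY y₁ hy₁ y₂ hy₂ hne
    have := congrFun h ⟨j, Nat.lt_succ_of_le hjn⟩
    simp only [Subtype.mk.injEq] at this
    have h1 := hcd (f^[j] y₁)
    have h2 := hcd (f^[j] y₂)
    rw [this] at h1
    have : dist (f^[j] y₁) (f^[j] y₂) < ε := by
      calc dist (f^[j] y₁) (f^[j] y₂) ≤ _ + _ := dist_triangle _ (c (f^[j] y₂)) _
      _ < ε / 2 + ε / 2 := by rw [dist_comm (c (f^[j] y₂))]; linarith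
      _ = ε := by ring
    linarith
  calc Y.card = Fintype.card ↥Y := (Fintype.card_coe Y).symm
  _ ≤ Fintype.card (Fin (n + 1) → ↥F) := Fintype.card_le_of_injective _ hinj
  _ = F.card ^ (n + 1) := by simp [Fintype.card_coe]

/-- Distinct preimage points under `f^[n]` are `(n, 2η)`-separated. -/
lemma fiber_sep {X : Type*} [MetricSpace X] {f : X → X} {lam η : ℝ} (hlam : 1 < lam)
    (hexp : ∀ x y : X, dist x y ≤ 2 * η → lam * dist x y ≤ dist (f x) (f y))
    {n : ℕ} {z y₁ y₂ : X} (h1 : f^[n] y₁ = z) (h2 : f^[n] y₂ = z) (hne : y₁ ≠ y₂) :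
    ∃ j ≤ n, 2 * η ≤ dist (f^[j] y₁) (f^[j] y₂) := by
  by_contra hcon
  push_neg at hcon
  have key : ∀ k ≤ n, lam ^ k * dist y₁ y₂ ≤ dist (f^[k] y₁) (f^[k] y₂) := by
    intro k hk
    induction k with
    | zero => simp
    | succ m ih =>
      have hm : m ≤ n := Nat.le_of_succ_le hk
      have h3 := hcon m hm
      have h4 := hexp (f^[m] y₁) (f^[m] y₂) h3.le
      have h5 := ih hm
      rw [Function.iterate_succ_apply', Function.iterate_succ_apply']
      calc lam ^ (m + 1) * dist y₁ y₂ = lam * (lam ^ m * dist y₁ y₂) := by ring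
      _ ≤ lam * dist (f^[m] y₁) (f^[m] y₂) :=
        mul_le_mul_of_nonneg_left h5 (by linarith)
      _ ≤ _ := h4
  have := key n le_rfl
  rw [h1, h2, dist_self] at this
  have hpos : (0:ℝ) < lam ^ n := pow_pos (by linarith) n
  have : dist y₁ y₂ ≤ 0 := by nlinarith [dist_nonneg (x := y₁) (y := y₂)]
  exact hne (dist_le_zero.1 this)

/-- `f` is surjective. -/
lemma exact_surj {X : Type*} [MetricSpace X] [CompactSpace X] [Nonempty X] {f : X → X}
    (hf : Continuous f) (hexact : TopExact f) : Function.Surjective f := by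
  by_contra hs
  rw [← Set.range_eq_univ] at hs
  have hrc : IsClosed (Set.range f) := (isCompact_range hf).isClosed
  have hU : IsOpen (Set.range f)ᶜ := hrc.isOpen_compl
  have hUne : (Set.range f)ᶜ.Nonempty := by
    rw [Set.nonempty_compl]; exact hs
  obtain ⟨m, hm⟩ := hexact _ hU hUne
  rcases Nat.eq_zero_or_pos m with rfl | hmpos
  · simp only [Function.iterate_zero, Set.image_id] at hm
    rcases ‹Nonempty X› with ⟨x⟩
    have : f x ∈ (Set.range f)ᶜ := hm ▸ Set.mem_univ _
    exact this ⟨x, rfl⟩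
  · apply hs
    apply Set.eq_univ_of_univ_subset
    rw [← hm]
    intro w hw
    obtain ⟨u, -, rfl⟩ := hw
    obtain ⟨m', rfl⟩ := Nat.exists_eq_add_of_lt hmpos
    rw [add_comm, Function.iterate_add_apply, Function.iterate_one]
    exact ⟨_, rfl⟩

lemma iterate_surj {X : Type*} (f : X → X) (hsurj : Function.Surjective f) (n : ℕ) :
    Function.Surjective (f^[n]) := by
  induction n with
  | zero => simpa using Function.surjective_id
  | succ m ih => rw [Function.iterate_succ]; exact ih.comp hsurj

/-- Fibers of `f^[n]` are finite. -/
lemma fiber_finite {X : Type*} [MetricSpace X] [CompactSpace X] {f : X → X} {lam η : ℝ}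
    (hlam : 1 < lam) (hη : 0 < η)
    (hexp : ∀ x y : X, dist x y ≤ 2 * η → lam * dist x y ≤ dist (f x) (f y))
    (n : ℕ) (z : X) : (f^[n] ⁻¹' {z}).Finite := by
  obtain ⟨K, hK, hKb⟩ := sep_card_bound f (ε := 2 * η) (by linarith)
  by_contra hinf
  rw [← Set.not_infinite, not_not] at hinf
  obtain ⟨Y, hYsub, hYcard⟩ := hinf.exists_subset_card_eq (K ^ (n + 1) + 1)
  have hsep : IsSepSet f n (2 * η) Y := by
    intro y₁ hy₁ y₂ hy₂ hne
    exact fiber_sep hlam hexp (hYsub hy₁) (hYsub hy₂) hne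
  have := hKb n Y hsep
  omega

/-- Uniform openness: a ball of radius `ξ` around `f x` is contained in the image of
the `η`-ball around `x`. -/
lemma uniform_open {X : Type*} [MetricSpace X] [CompactSpace X] [Nonempty X] {f : X → X}
    (hf : Continuous f) (hopen : IsOpenMap f) {η : ℝ} (hη : 0 < η) :
    ∃ ξ > 0, ∀ x w : X, dist w (f x) < ξ → ∃ u, f u = w ∧ dist u x < η := by
  have h1 : ∀ x : X, ∃ r > 0, ball (f x) r ⊆ f '' ball x (η / 2) := by
    intro x
    have ho : IsOpen (f '' ball x (η / 2)) := hopen _ isOpen_ball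
    have hmem : f x ∈ f '' ball x (η / 2) :=
      ⟨x, mem_ball_self (by linarith), rfl⟩
    exact Metric.isOpen_iff.1 ho _ hmem
  choose r hr hball using h1
  have h2 : ∀ x : X, ∃ d > 0, d ≤ η / 2 ∧
      ∀ x', dist x' x < d → dist (f x') (f x) < r x / 2 := by
    intro x
    obtain ⟨d, hd, hdprop⟩ := Metric.continuous_iff.1 hf x (r x / 2) (half_pos (hr x))
    exact ⟨min d (η / 2), lt_min hd (by linarith), min_le_right _ _,
      fun x' hx' => hdprop x' (lt_of_lt_of_le hx' (min_le_left _ _))⟩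
  choose d hd hdη hdprop using h2
  obtain ⟨s, hs⟩ := isCompact_univ.elim_finite_subcover (fun x : X => ball x (d x))
    (fun x => isOpen_ball) (fun x _ => mem_iUnion.2 ⟨x, mem_ball_self (hd x)⟩)
  have hsne : s.Nonempty := by
    rcases ‹Nonempty X› with ⟨x⟩
    have := hs (mem_univ x)
    simp only [mem_iUnion, exists_prop] at this
    exact ⟨this.choose, this.choose_spec.1⟩
  refine ⟨s.inf' hsne (fun i => r i / 2), ?_, ?_⟩
  · exact (Finset.lt_inf'_iff hsne).2 fun i _ => half_pos (hr i)
  · intro x w hw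
    have := hs (mem_univ x)
    simp only [mem_iUnion, exists_prop] at this
    obtain ⟨i, his, hxi⟩ := this
    have hxi' : dist (f x) (f i) < r i / 2 := hdprop i x hxi
    have hwi : dist w (f i) < r i := by
      have h3 : s.inf' hsne (fun i => r i / 2) ≤ r i / 2 :=
        Finset.inf'_le _ his
      calc dist w (f i) ≤ dist w (f x) + dist (f x) (f i) := dist_triangle _ _ _
      _ < r i / 2 + r i / 2 := by linarith
      _ = r i := by ring
    obtain ⟨u, hu, rfl⟩ := hball i hwi
    refine ⟨u, rfl, ?_⟩
    calc dist u x ≤ dist u i + dist i x := dist_triangle _ _ _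
    _ < η / 2 + d i := by rw [dist_comm i x]; exact add_lt_add (mem_ball.1 hu) hxi
    _ ≤ η := by have := hdη i; linarith

/-- Iterated shadowing pullback. -/
lemma pullback_iter {X : Type*} [MetricSpace X] {f : X → X} {lam η ξ : ℝ}
    (hlam : 1 < lam) (hη : 0 < η)
    (hexp : ∀ x y : X, dist x y ≤ 2 * η → lam * dist x y ≤ dist (f x) (f y))
    (hξ : ∀ x w : X, dist w (f x) < ξ → ∃ u, f u = w ∧ dist u x < η)
    {r : ℝ} (hrξ : r ≤ ξ) :
    ∀ (n : ℕ) (y w : X), dist w (f^[n] y) < r →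
      ∃ u, f^[n] u = w ∧ ∀ j ≤ n, dist (f^[j] u) (f^[j] y) < r := by
  intro n
  induction n with
  | zero =>
    intro y w hw
    exact ⟨w, rfl, fun j hj => by simpa [Nat.le_zero.1 hj] using hw⟩
  | succ m ih =>
    intro y w hw
    rw [Function.iterate_succ_apply'] at hw
    obtain ⟨w', hw'f, hw'd⟩ := hξ (f^[m] y) w (lt_of_lt_of_le hw hrξ)
    have hcontr : lam * dist w' (f^[m] y) ≤ dist w (f^[m + 1] y) := by
      rw [Function.iterate_succ_apply', ← hw'f]
      exact hexp _ _ (by linarith)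
    have hw'r : dist w' (f^[m] y) < r := by
      rw [Function.iterate_succ_apply'] at hcontr
      nlinarith [dist_nonneg (x := w') (y := f^[m] y)]
    obtain ⟨u, huf, hud⟩ := ih y w' hw'r
    refine ⟨u, by rw [Function.iterate_succ_apply', huf, hw'f], fun j hj => ?_⟩
    by_cases hjm : j ≤ m
    · exact hud j hjm
    · have hje : j = m + 1 := by omega
      subst hje
      rw [Function.iterate_succ_apply', Function.iterate_succ_apply', huf, hw'f]
      exact hw

/-- Uniform exactness: there is one `N` such that every `r`-ball's `N`-th image hits `z`. -/
lemma uniform_exact {X : Type*} [MetricSpace X] [CompactSpace X] [Nonempty X] {f : X → X}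
    (hf : Continuous f) (hexact : TopExact f) (z : X) {r : ℝ} (hr : 0 < r) :
    ∃ N : ℕ, ∀ x : X, ∃ w, dist w x < r ∧ f^[N] w = z := by
  have hsurj := exact_surj hf hexact
  have h1 : ∀ x : X, ∃ N : ℕ, f^[N] '' ball x (r / 2) = univ := fun x =>
    hexact _ isOpen_ball ⟨x, mem_ball_self (half_pos hr)⟩
  choose Nx hNx using h1
  have hmono : ∀ (x : X) (k : ℕ), f^[k + Nx x] '' ball x (r / 2) = univ := by
    intro x k
    rw [Function.iterate_add, Set.image_comp, hNx, Set.image_univ,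
      Set.range_eq_univ.2 (iterate_surj f hsurj k)]
  obtain ⟨s, hs⟩ := isCompact_univ.elim_finite_subcover (fun x : X => ball x (r / 2))
    (fun x => isOpen_ball) (fun x _ => mem_iUnion.2 ⟨x, mem_ball_self (half_pos hr)⟩)
  refine ⟨s.sup Nx, fun x => ?_⟩
  have := hs (mem_univ x)
  simp only [mem_iUnion, exists_prop] at this
  obtain ⟨i, his, hxi⟩ := this
  have hNi : Nx i ≤ s.sup Nx := Finset.le_sup his
  have himg : f^[s.sup Nx] '' ball i (r / 2) = univ := by
    have := hmono i (s.sup Nx - Nx i)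
    rwa [Nat.sub_add_cancel hNi] at this
  have hz : z ∈ f^[s.sup Nx] '' ball i (r / 2) := himg ▸ mem_univ z
  obtain ⟨w, hwb, hwz⟩ := hz
  refine ⟨w, ?_, hwz⟩
  calc dist w x ≤ dist w i + dist i x := dist_triangle _ _ _
  _ < r / 2 + r / 2 := add_lt_add (mem_ball.1 hwb) (by rw [dist_comm]; exact hxi)
  _ = r := by ring

lemma birkhoff_abs_le {X : Type*} {f : X → X} {φ : X → ℝ} {C : ℝ}
    (hC : ∀ x, |φ x| ≤ C) (n : ℕ) (y : X) : |birkhoff f φ n y| ≤ n * C := by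
  calc |birkhoff f φ n y| ≤ ∑ j ∈ Finset.range n, |φ (f^[j] y)| :=
        Finset.abs_sum_le_sum_abs _ _
  _ ≤ ∑ _j ∈ Finset.range n, C := Finset.sum_le_sum fun j _ => hC _
  _ = n * C := by simp [mul_comm]

lemma birkhoff_add {X : Type*} (f : X → X) (φ : X → ℝ) (n N : ℕ) (y : X) :
    birkhoff f φ (n + N) y = birkhoff f φ n y + birkhoff f φ N (f^[n] y) := by
  unfold birkhoff
  rw [Finset.sum_range_add]
  congr 1
  refine Finset.sum_congr rfl fun j _ => ?_
  rw [add_comm n j, Function.iterate_add_apply]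

/-- The key estimate: sums over `(n,ε)`-separated sets are dominated by the tree sum at
time `n + N`, up to controlled factors. -/
lemma key_estimate {X : Type*} [MetricSpace X] [CompactSpace X] {f : X → X} {lam η : ℝ}
    (hlam : 1 < lam) (hη : 0 < η)
    (hexp : ∀ x y : X, dist x y ≤ 2 * η → lam * dist x y ≤ dist (f x) (f y))
    (hf : Continuous f) (hopen : IsOpenMap f) (hexact : TopExact f)
    {φ : X → ℝ} (hφ : Continuous φ) (z : X) {C : ℝ} (hC : ∀ x, |φ x| ≤ C)
    {ε γ : ℝ} (hε : 0 < ε) (hγ : 0 < γ) :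
    ∃ N : ℕ, ∀ (n : ℕ) (Y : Finset X), IsSepSet f n ε Y →
      ∀ (G : Finset X), (∀ x, x ∈ G ↔ f^[n + N] x = z) →
      ∑ y ∈ Y, Real.exp (birkhoff f φ n y) ≤
        Real.exp (n * γ + N * C) * ∑ y ∈ G, Real.exp (birkhoff f φ (n + N) y) := by
  classical
  haveI : Nonempty X := ⟨z⟩
  -- uniform continuity modulus
  obtain ⟨rγ, hrγ, hrγprop⟩ : ∃ rγ > 0, ∀ a b : X, dist a b < rγ → |φ a - φ b| ≤ γ := by
    obtain ⟨d, hd, hdp⟩ := Metric.uniformContinuous_iff.1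
      (CompactSpace.uniformContinuous_of_continuous hφ) γ hγ
    exact ⟨d, hd, fun a b hab => by
      have := hdp hab
      rw [Real.dist_eq] at this
      exact this.le⟩
  obtain ⟨ξ, hξ, hξprop⟩ := uniform_open hf hopen hη
  set r : ℝ := min (min ξ rγ) (ε / 2) with hr
  have hr0 : 0 < r := lt_min (lt_min hξ hrγ) (half_pos hε)
  have hrξ : r ≤ ξ := ((min_le_left _ _).trans (min_le_left _ _))
  have hrrγ : r ≤ rγ := ((min_le_left _ _).trans (min_le_right _ _))
  have hrε : r ≤ ε / 2 := min_le_right _ _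
  obtain ⟨N, hN⟩ := uniform_exact hf hexact z hr0
  -- shadowing preimages
  have hshadow : ∀ (n : ℕ) (y : X), ∃ u, f^[n + N] u = z ∧
      ∀ j ≤ n, dist (f^[j] u) (f^[j] y) < r := by
    intro n y
    obtain ⟨w, hwd, hwz⟩ := hN (f^[n] y)
    obtain ⟨u, huw, hud⟩ := pullback_iter hlam hη hexp hξprop hrξ n y w hwd
    refine ⟨u, ?_, hud⟩
    rw [add_comm, Function.iterate_add_apply, huw, hwz]
  choose u hu1 hu2 using hshadow
  refine ⟨N, fun n Y hY G hG => ?_⟩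
  -- pointwise estimate
  have hpt : ∀ y : X, Real.exp (birkhoff f φ n y) ≤
      Real.exp (n * γ + N * C) * Real.exp (birkhoff f φ (n + N) (u n y)) := by
    intro y
    rw [← Real.exp_add]
    apply Real.exp_le_exp.2
    have h1 : |birkhoff f φ n (u n y) - birkhoff f φ n y| ≤ n * γ := by
      have : birkhoff f φ n (u n y) - birkhoff f φ n y =
          ∑ j ∈ Finset.range n, (φ (f^[j] (u n y)) - φ (f^[j] y)) := by
        unfold birkhoff; rw [Finset.sum_sub_distrib]
      rw [this]
      calc |∑ j ∈ Finset.range n, (φ (f^[j] (u n y)) - φ (f^[j] y))|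
          ≤ ∑ j ∈ Finset.range n, |φ (f^[j] (u n y)) - φ (f^[j] y)| :=
            Finset.abs_sum_le_sum_abs _ _
      _ ≤ ∑ _j ∈ Finset.range n, γ := by
          refine Finset.sum_le_sum fun j hj => ?_
          exact hrγprop _ _ (lt_of_lt_of_le
            (hu2 n y j (Finset.mem_range.1 hj).le) hrrγ)
      _ = n * γ := by simp [mul_comm]
    have h2 : |birkhoff f φ N (f^[n] (u n y))| ≤ N * C := birkhoff_abs_le hC _ _
    have h3 := birkhoff_add f φ n N (u n y)
    have h4 := abs_le.1 h1
    have h5 := abs_le.1 h2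
    linarith [h4.1, h5.1]
  -- injectivity
  have hinj : Set.InjOn (u n) ↑Y := by
    intro y₁ hy₁ y₂ hy₂ huy
    by_contra hne
    obtain ⟨j, hj, hjd⟩ := hY y₁ hy₁ y₂ hy₂ hne
    have d1 := hu2 n y₁ j hj
    have d2 := hu2 n y₂ j hj
    rw [huy] at d1
    have : dist (f^[j] y₁) (f^[j] y₂) < ε := by
      calc dist (f^[j] y₁) (f^[j] y₂)
          ≤ dist (f^[j] y₁) (f^[j] (u n y₂)) + dist (f^[j] (u n y₂)) (f^[j] y₂) :=
            dist_triangle _ _ _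
      _ < r + r := by rw [dist_comm (f^[j] y₁)]; exact add_lt_add d1 d2
      _ ≤ ε := by linarith
    linarith
  calc ∑ y ∈ Y, Real.exp (birkhoff f φ n y)
      ≤ ∑ y ∈ Y, Real.exp (n * γ + N * C) * Real.exp (birkhoff f φ (n + N) (u n y)) :=
        Finset.sum_le_sum fun y _ => hpt y
  _ = Real.exp (n * γ + N * C) * ∑ y ∈ Y, Real.exp (birkhoff f φ (n + N) (u n y)) := by
        rw [Finset.mul_sum]
  _ ≤ Real.exp (n * γ + N * C) * ∑ y ∈ G, Real.exp (birkhoff f φ (n + N) y) := by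
        apply mul_le_mul_of_nonneg_left _ (Real.exp_nonneg _)
        have himg : ∑ y ∈ Y, Real.exp (birkhoff f φ (n + N) (u n y)) =
            ∑ x ∈ Y.image (u n), Real.exp (birkhoff f φ (n + N) x) :=
          (Finset.sum_image (f := fun x => Real.exp (birkhoff f φ (n + N) x))
            (g := u n) fun y hy y' hy' h => hinj hy hy' h).symm
        rw [himg]
        apply Finset.sum_le_sum_of_subset_of_nonneg
        · intro x hx
          obtain ⟨y, hy, rfl⟩ := Finset.mem_image.1 hx
          exact (hG _).2 (hu1 n y)
        · exact fun x _ _ => Real.exp_nonneg _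

lemma log_bound_aux {K : ℕ} (hK : 0 < K) {C v : ℝ} (hC : 0 ≤ C) {n : ℕ} (hn : 1 ≤ n)
    (hlb : Real.exp (-((n : ℝ) * C)) ≤ v) (hub : v ≤ (K : ℝ) ^ (n + 1) * Real.exp (n * C)) :
    -C ≤ (1 / (n : ℝ)) * Real.log v ∧
      (1 / (n : ℝ)) * Real.log v ≤ 2 * Real.log K + C := by
  have hn0 : (0 : ℝ) < n := by exact_mod_cast hn
  have hv0 : 0 < v := lt_of_lt_of_le (Real.exp_pos _) hlb
  have hK1 : (1 : ℝ) ≤ K := by exact_mod_cast hK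
  have hlogK : 0 ≤ Real.log K := Real.log_nonneg hK1
  have h1 : -((n : ℝ) * C) ≤ Real.log v := by
    have := Real.log_le_log (Real.exp_pos _) hlb
    rwa [Real.log_exp] at this
  have h2 : Real.log v ≤ ((n : ℝ) + 1) * Real.log K + n * C := by
    have h := Real.log_le_log hv0 hub
    rw [Real.log_mul (by positivity) (Real.exp_ne_zero _), Real.log_pow, Real.log_exp] at h
    push_cast at h
    linarith
  constructor
  · have h3 := mul_le_mul_of_nonneg_left h1 (one_div_pos.2 hn0).le
    calc -C = (1 / (n : ℝ)) * (-((n : ℝ) * C)) := by field_simp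
    _ ≤ _ := h3
  · have h3 := mul_le_mul_of_nonneg_left h2 (one_div_pos.2 hn0).le
    refine le_trans h3 ?_
    have h4 : (1 / (n : ℝ)) * (((n : ℝ) + 1) * Real.log K + n * C) =
        (((n : ℝ) + 1) / n) * Real.log K + C := by field_simp
    have hn1 : (1 : ℝ) ≤ (n : ℝ) := by exact_mod_cast hn
    have h5 : ((n : ℝ) + 1) / n ≤ 2 := by rw [div_le_iff₀ hn0]; linarith
    rw [h4]
    nlinarith [hlogK]

/-- for a continuous, open, distance-expanding and topologically exact map of
a compact metric space and a continuous potential `φ`, the tree pressure at any point `z`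
equals the topological pressure via separated sets; in particular it does not depend
on `z`. -/
theorem treePressure_eq_sepPressure {X : Type*} [MetricSpace X] [CompactSpace X]
    (f : X → X) (hf : Continuous f) (hopen : IsOpenMap f) (hexp : DistExpanding f)
    (hexact : TopExact f) (φ : X → ℝ) (hφ : Continuous φ) (z : X) :
    treePressure f φ z = sepPressure f φ := by
  classical
  obtain ⟨lam, hlam, η, hη, hexp⟩ := hexp
  haveI : Nonempty X := ⟨z⟩
  -- a bound for |φ|
  obtain ⟨C0, hC0⟩ := isCompact_univ.exists_bound_of_continuousOn hφ.continuousOn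
  set C : ℝ := max C0 0 with hCdef
  have hC : ∀ x, |φ x| ≤ C := fun x =>
    le_trans (by rw [← Real.norm_eq_abs]; exact hC0 x (mem_univ x)) (le_max_left _ _)
  have hCnn : 0 ≤ C := le_max_right _ _
  -- fibers
  have hfib : ∀ n : ℕ, ((f^[n]) ⁻¹' {z} : Set X).Finite := fun n =>
    fiber_finite hlam hη hexp n z
  have hfibmem : ∀ n x, x ∈ (hfib n).toFinset ↔ f^[n] x = z := fun n x => by
    rw [Set.Finite.mem_toFinset]; rfl
  have hfibne : ∀ n, ((hfib n).toFinset).Nonempty := by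
    intro n
    obtain ⟨y, hy⟩ := iterate_surj f (exact_surj hf hexact) n z
    exact ⟨y, (hfibmem n y).2 hy⟩
  set T : ℕ → ℝ := fun n => ∑ y ∈ (hfib n).toFinset, Real.exp (birkhoff f φ n y) with hTdef
  have hTpos : ∀ n, 0 < T n := fun n =>
    Finset.sum_pos (fun y _ => Real.exp_pos _) (hfibne n)
  have htsum : ∀ n, (∑' y : ((f^[n]) ⁻¹' {z} : Set X), Real.exp (birkhoff f φ n y)) = T n := by
    intro n
    letI := (hfib n).fintype
    rw [tsum_fintype]
    have := Finset.sum_subtype (p := fun x => x ∈ ((f^[n]) ⁻¹' {z} : Set X))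
      (F := (hfib n).fintype)
      (hfib n).toFinset (fun x => (hfib n).mem_toFinset)
      (fun x => Real.exp (birkhoff f φ n x))
    exact this.symm
  -- cardinality bound for the fibers
  obtain ⟨K2, hK2pos, hK2⟩ := sep_card_bound f (ε := 2 * η) (by linarith)
  have hfibsep : ∀ n, IsSepSet f n (2 * η) ((hfib n).toFinset) := by
    intro n y₁ h1 y₂ h2 hne
    exact fiber_sep hlam hexp ((hfibmem n _).1 h1) ((hfibmem n _).1 h2) hne
  have hsum_ub : ∀ (K : ℕ) (n : ℕ) (Y : Finset X), Y.card ≤ K ^ (n + 1) →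
      ∑ y ∈ Y, Real.exp (birkhoff f φ n y) ≤ (K : ℝ) ^ (n + 1) * Real.exp (n * C) := by
    intro K n Y hcard
    calc ∑ y ∈ Y, Real.exp (birkhoff f φ n y)
        ≤ ∑ _y ∈ Y, Real.exp (n * C) := Finset.sum_le_sum fun y _ =>
          Real.exp_le_exp.2 (abs_le.1 (birkhoff_abs_le hC n y)).2
    _ = (Y.card : ℝ) * Real.exp (n * C) := by rw [Finset.sum_const, nsmul_eq_mul]
    _ ≤ (K : ℝ) ^ (n + 1) * Real.exp (n * C) := by
        apply mul_le_mul_of_nonneg_right _ (Real.exp_nonneg _)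
        exact_mod_cast Nat.cast_le.2 hcard
  have hTub : ∀ n, T n ≤ (K2 : ℝ) ^ (n + 1) * Real.exp (n * C) :=
    fun n => hsum_ub K2 n _ (hK2 n _ (hfibsep n))
  have hTlb : ∀ n : ℕ, Real.exp (-((n : ℝ) * C)) ≤ T n := by
    intro n
    obtain ⟨y, hy⟩ := hfibne n
    calc Real.exp (-((n : ℝ) * C)) ≤ Real.exp (birkhoff f φ n y) :=
          Real.exp_le_exp.2 (abs_le.1 (birkhoff_abs_le hC n y)).1
    _ ≤ T n := Finset.single_le_sum (fun i _ => (Real.exp_pos _).le) hy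
  set t : ℕ → ℝ := fun n => (1 / (n : ℝ)) * Real.log (T n) with htdef
  set B : ℝ := 2 * Real.log K2 + C with hBdef
  have hB0 : 0 ≤ B := by
    have : 0 ≤ Real.log K2 := Real.log_nonneg (by exact_mod_cast hK2pos)
    simp only [hBdef]; linarith
  have htb : ∀ n : ℕ, 1 ≤ n → -C ≤ t n ∧ t n ≤ B :=
    fun n hn => log_bound_aux hK2pos hCnn hn (hTlb n) (hTub n)
  have htBddAbove : Filter.IsBoundedUnder (· ≤ ·) Filter.atTop t :=
    ⟨B, Filter.eventually_map.2 (by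
      filter_upwards [Filter.eventually_ge_atTop 1] with n hn using (htb n hn).2)⟩
  have htBddBelow : Filter.IsBoundedUnder (· ≥ ·) Filter.atTop t :=
    ⟨-C, Filter.eventually_map.2 (by
      filter_upwards [Filter.eventually_ge_atTop 1] with n hn using (htb n hn).1)⟩
  set P : ℝ := Filter.limsup t Filter.atTop with hPdef
  have hP : treePressure f φ z = P := by
    have heq : (fun n : ℕ => (1 / (n : ℝ)) * Real.log (∑' y : ((f^[n]) ⁻¹' {z} : Set X),
        Real.exp (birkhoff f φ n y))) = t := by
      funext n; rw [htsum n]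
    unfold treePressure
    rw [heq]
  -- the per-ε limsup equals P for all small positive ε
  have hgP : ∀ ε : ℝ, 0 < ε → ε < 2 * η →
      Filter.limsup (fun n : ℕ => (1 / (n : ℝ)) * Real.log
        (sSup {s : ℝ | ∃ Y : Finset X, IsSepSet f n ε Y ∧
          s = ∑ y ∈ Y, Real.exp (birkhoff f φ n y)})) Filter.atTop = P := by
    intro ε hε0 hε2η
    obtain ⟨Kε, hKεpos, hKε⟩ := sep_card_bound f hε0
    set Sset : ℕ → Set ℝ := fun n => {s : ℝ | ∃ Y : Finset X, IsSepSet f n ε Y ∧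
      s = ∑ y ∈ Y, Real.exp (birkhoff f φ n y)} with hSsetdef
    have hSub : ∀ n, ∀ s ∈ Sset n, s ≤ (Kε : ℝ) ^ (n + 1) * Real.exp (n * C) := by
      rintro n s ⟨Y, hY, rfl⟩
      exact hsum_ub Kε n Y (hKε n Y hY)
    have hSbdd : ∀ n, BddAbove (Sset n) := fun n => ⟨_, hSub n⟩
    have hSne : ∀ n, (Sset n).Nonempty := by
      intro n
      refine ⟨_, ⟨{z}, ?_, rfl⟩⟩
      intro y₁ h1 y₂ h2 hne
      rw [Finset.mem_singleton] at h1 h2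
      exact absurd (h1.trans h2.symm) hne
    set Sv : ℕ → ℝ := fun n => sSup (Sset n) with hSvdef
    have hSvub : ∀ n, Sv n ≤ (Kε : ℝ) ^ (n + 1) * Real.exp (n * C) :=
      fun n => csSup_le (hSne n) (hSub n)
    have hSvlb : ∀ n : ℕ, Real.exp (-((n : ℝ) * C)) ≤ Sv n := by
      intro n
      have hmem : ∑ y ∈ ({z} : Finset X), Real.exp (birkhoff f φ n y) ∈ Sset n := by
        refine ⟨{z}, ?_, rfl⟩
        intro y₁ h1 y₂ h2 hne
        rw [Finset.mem_singleton] at h1 h2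
        exact absurd (h1.trans h2.symm) hne
      have h1 : Real.exp (-((n : ℝ) * C)) ≤ ∑ y ∈ ({z} : Finset X),
          Real.exp (birkhoff f φ n y) := by
        rw [Finset.sum_singleton]
        exact Real.exp_le_exp.2 (abs_le.1 (birkhoff_abs_le hC n z)).1
      exact h1.trans (le_csSup (hSbdd n) hmem)
    set t' : ℕ → ℝ := fun n => (1 / (n : ℝ)) * Real.log (Sv n) with ht'def
    have ht'b : ∀ n : ℕ, 1 ≤ n → -C ≤ t' n ∧ t' n ≤ 2 * Real.log Kε + C :=
      fun n hn => log_bound_aux hKεpos hCnn hn (hSvlb n) (hSvub n)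
    have ht'BddAbove : Filter.IsBoundedUnder (· ≤ ·) Filter.atTop t' :=
      ⟨2 * Real.log Kε + C, Filter.eventually_map.2 (by
        filter_upwards [Filter.eventually_ge_atTop 1] with n hn using (ht'b n hn).2)⟩
    have ht'BddBelow : Filter.IsBoundedUnder (· ≥ ·) Filter.atTop t' :=
      ⟨-C, Filter.eventually_map.2 (by
        filter_upwards [Filter.eventually_ge_atTop 1] with n hn using (ht'b n hn).1)⟩
    -- lower bound : P ≤ limsup t'
    have hlow : P ≤ Filter.limsup t' Filter.atTop := by
      apply Filter.limsup_le_limsup _ htBddBelow.isCoboundedUnder_le ht'BddAbove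
      filter_upwards [Filter.eventually_ge_atTop 1] with n hn
      have hTmem : T n ∈ Sset n := by
        refine ⟨(hfib n).toFinset, ?_, rfl⟩
        intro y₁ h1 y₂ h2 hne
        obtain ⟨j, hj, hd⟩ := hfibsep n y₁ h1 y₂ h2 hne
        exact ⟨j, hj, le_trans hε2η.le hd⟩
      have h1 : T n ≤ Sv n := le_csSup (hSbdd n) hTmem
      have hn0 : (0 : ℝ) < n := by exact_mod_cast hn
      exact mul_le_mul_of_nonneg_left (Real.log_le_log (hTpos n) h1)
        (one_div_pos.2 hn0).le
    -- upper bound : limsup t' ≤ P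
    have hup : Filter.limsup t' Filter.atTop ≤ P := by
      apply le_of_forall_pos_le_add
      intro δ hδ
      obtain ⟨N, hNest⟩ := key_estimate hlam hη hexp hf hopen hexact hφ z hC hε0
        (γ := δ / 4) (by linarith)
      have hSvkey : ∀ n, Sv n ≤ Real.exp (n * (δ / 4) + N * C) * T (n + N) := by
        intro n
        apply csSup_le (hSne n)
        rintro s ⟨Y, hY, rfl⟩
        exact hNest n Y hY _ (hfibmem (n + N))
      -- eventual bounds
      have e1 : ∀ᶠ n : ℕ in Filter.atTop, t (n + N) < P + δ / 4 := by
        have h := Filter.eventually_lt_of_limsup_lt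
          (show Filter.limsup t Filter.atTop < P + δ / 4 by
            rw [← hPdef]; linarith) htBddAbove
        exact (tendsto_add_atTop_nat N).eventually h
      have e2 : ∀ᶠ n : ℕ in Filter.atTop,
          ((N : ℝ) * C + N * B) / n < δ / 2 := by
        exact (tendsto_const_div_atTop_nhds_zero_nat ((N : ℝ) * C + N * B)).eventually_lt_const
          (by linarith)
      have hevent : ∀ᶠ n : ℕ in Filter.atTop, t' n ≤ P + δ := by
        filter_upwards [e1, e2, Filter.eventually_ge_atTop 1] with n h1 h2 hn
        have hn0 : (0 : ℝ) < n := by exact_mod_cast hn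
        have hnN1 : 1 ≤ n + N := le_add_right hn
        have hL : Real.log (Sv n) ≤ n * (δ / 4) + N * C + ((n : ℝ) + N) * t (n + N) := by
          have hlog := Real.log_le_log (lt_of_lt_of_le (Real.exp_pos _) (hSvlb n)) (hSvkey n)
          rw [Real.log_mul (Real.exp_ne_zero _) (ne_of_gt (hTpos _)), Real.log_exp] at hlog
          have hnN0 : (0 : ℝ) < ((n + N : ℕ) : ℝ) := by exact_mod_cast hnN1
          have : Real.log (T (n + N)) = ((n + N : ℕ) : ℝ) * t (n + N) := by
            simp only [htdef]
            field_simp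
          rw [this] at hlog
          push_cast at hlog ⊢
          linarith
        have ht1 : t (n + N) ≤ P + δ / 4 := h1.le
        have ht2 : t (n + N) ≤ B := (htb (n + N) hnN1).2
        have h3 : (N : ℝ) * C + N * B < n * (δ / 2) := by
          rw [div_lt_iff₀ hn0] at h2; linarith
        have hNt : (N : ℝ) * t (n + N) ≤ N * B :=
          mul_le_mul_of_nonneg_left ht2 (Nat.cast_nonneg N)
        have hnt : (n : ℝ) * t (n + N) ≤ n * (P + δ / 4) :=
          mul_le_mul_of_nonneg_left ht1 hn0.le
        have hfinal : Real.log (Sv n) ≤ n * (P + δ) := by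
          calc Real.log (Sv n) ≤ n * (δ / 4) + N * C + ((n : ℝ) + N) * t (n + N) := hL
          _ = n * (δ / 4) + N * C + (n : ℝ) * t (n + N) + (N : ℝ) * t (n + N) := by ring
          _ ≤ n * (δ / 4) + N * C + n * (P + δ / 4) + N * B := by nlinarith [hnt, hNt]
          _ ≤ n * (P + δ) := by linarith
        simp only [ht'def]
        calc (1 / (n : ℝ)) * Real.log (Sv n) ≤ (1 / (n : ℝ)) * ((n : ℝ) * (P + δ)) :=
          mul_le_mul_of_nonneg_left hfinal (one_div_pos.2 hn0).le
        _ = P + δ := by field_simp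
      exact Filter.limsup_le_of_le ht'BddBelow.isCoboundedUnder_le hevent
    exact le_antisymm hup hlow
  -- conclusion
  have hsep : sepPressure f φ = P := by
    unfold sepPressure
    have hev : ∀ᶠ ε in 𝓝[>] (0 : ℝ),
        Filter.limsup (fun n : ℕ => (1 / (n : ℝ)) * Real.log
          (sSup {s : ℝ | ∃ Y : Finset X, IsSepSet f n ε Y ∧
            s = ∑ y ∈ Y, Real.exp (birkhoff f φ n y)})) Filter.atTop = P := by
      filter_upwards [Ioo_mem_nhdsGT_of_mem
        (show (0 : ℝ) ∈ Ico (0 : ℝ) (2 * η) by constructor <;> [rfl; linarith])]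
        with ε hε
      exact hgP ε hε.1 hε.2
    rw [Filter.limsup_congr hev, Filter.limsup_const]
  rw [hP, hsep]

end
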